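/- Let G be a 4-connected planar triangulation and let S be an independent set of vertices of degree at most 6 in G such that S saturates no 4-cycle and no 5-cycle of G. Then for any separating 4-cycle C of G, the number of vertices of S on C plus the number of vertices of S off C with at least 3 neighbors on C is at most 1. -/
import Mathlib


open SimpleGraph Set

variable {V : Type*}

/-- An independent set of vertices. -/
def IndepSet (G : SimpleGraph V) (S : Set V) : Prop :=
  ∀ a ∈ S, ∀ b ∈ S, a ≠ b → ¬ G.Adj a b

/-- Three distinct mutually adjacent vertices, i.e. a triangle (3-cycle). -/
def IsTriangle (G : SimpleGraph V) (a b c : V) : Prop :=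
  a ≠ b ∧ a ≠ c ∧ b ≠ c ∧ G.Adj a b ∧ G.Adj b c ∧ G.Adj a c

/-- The four listed vertices form a 4-cycle `a b c d a`. -/
def IsCycle4 (G : SimpleGraph V) (a b c d : V) : Prop :=
  ([a, b, c, d] : List V).Nodup ∧ G.Adj a b ∧ G.Adj b c ∧ G.Adj c d ∧ G.Adj d a

/-- The five listed vertices form a 5-cycle `a b c d e a`. -/
def IsCycle5 (G : SimpleGraph V) (a b c d e : V) : Prop :=
  ([a, b, c, d, e] : List V).Nodup ∧
    G.Adj a b ∧ G.Adj b c ∧ G.Adj c d ∧ G.Adj d e ∧ G.Adj e a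

/-- Deleting the vertex set `s` disconnects `G`. -/
def IsSeparating (G : SimpleGraph V) (s : Set V) : Prop :=
  ∃ a b : ↥(sᶜ), ¬ (G.induce sᶜ).Reachable a b

/-- `G` is 4-connected: more than 4 vertices, and removing any at most 3 vertices
leaves a connected graph. -/
def FourConnected (G : SimpleGraph V) [Fintype V] : Prop :=
  4 < Fintype.card V ∧ ∀ s : Set V, s.ncard ≤ 3 → (G.induce sᶜ).Connected

/-- `G` is 2-connected: more than 2 vertices, and removing any single vertex
leaves a connected graph. -/
def TwoConnected (G : SimpleGraph V) [Fintype V] : Prop :=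
  2 < Fintype.card V ∧ ∀ s : Set V, s.ncard ≤ 1 → (G.induce sᶜ).Connected

/-- `f` is the edge set of a triangle of `G`. -/
def IsTriangleFace [DecidableEq V] (G : SimpleGraph V) (f : Finset (Sym2 V)) : Prop :=
  ∃ a b c : V, IsTriangle G a b c ∧ f = {s(a, b), s(b, c), s(a, c)}

/-- A combinatorial plane triangulation structure on `G`: a connected graph together with a
set of triangular faces such that every edge lies on exactly two faces and Euler's formula
holds.  This encodes a plane graph in which every face (including the outer one) is bounded
by a triangle. -/
structure PlaneTriangulation [Fintype V] [DecidableEq V] (G : SimpleGraph V) where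
  connected : G.Connected
  faces : Set (Finset (Sym2 V))
  face_tri : ∀ f ∈ faces, IsTriangleFace G f
  edge_faces : ∀ e ∈ G.edgeSet, {f ∈ faces | e ∈ f}.ncard = 2
  euler : (Fintype.card V : ℤ) - (G.edgeSet.ncard : ℤ) + (faces.ncard : ℤ) = 2

/-- `f` is the edge set of a cycle of `G`. -/
def IsCycleFace [DecidableEq V] (G : SimpleGraph V) (f : Finset (Sym2 V)) : Prop :=
  ∃ (v : V) (c : G.Walk v v), c.IsCycle ∧ f = c.edges.toFinset

/-- A combinatorial plane graph structure on a 2-connected graph `G`: all faces are bounded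
by cycles, every edge lies on exactly two faces, and Euler's formula holds. -/
structure PlaneGraph [Fintype V] [DecidableEq V] (G : SimpleGraph V) where
  connected : G.Connected
  faces : Set (Finset (Sym2 V))
  face_cyc : ∀ f ∈ faces, IsCycleFace G f
  edge_faces : ∀ e ∈ G.edgeSet, {f ∈ faces | e ∈ f}.ncard = 2
  euler : (Fintype.card V : ℤ) - (G.edgeSet.ncard : ℤ) + (faces.ncard : ℤ) = 2

/-- `K` is the vertex set of a connected component of `G - S`. -/
def IsCompOf (G : SimpleGraph V) (S K : Set V) : Prop :=
  K.Nonempty ∧ Disjoint K S ∧ (G.induce K).Connected ∧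
    ∀ a ∈ K, ∀ b : V, b ∉ S → G.Adj a b → b ∈ K

/-- The attachments on `S` of the bridge with component `K`. -/
def Attachments (G : SimpleGraph V) (S K : Set V) : Set V :=
  {v ∈ S | ∃ w ∈ K, G.Adj v w}

/-- `p` is a `C`-Tutte path: a path such that every `p`-bridge has at most 3 attachments,
and every `p`-bridge containing an edge of `C` has at most 2 attachments.  (Bridges that are
single edges always have exactly two attachments, so only bridges arising from components
of `G - V(p)` are constrained.) -/
def IsTuttePath (G : SimpleGraph V) (C : Set (Sym2 V)) {x y : V} (p : G.Walk x y) : Prop :=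
  p.IsPath ∧
    ∀ K : Set V, IsCompOf G {v | v ∈ p.support} K →
      (Attachments G {v | v ∈ p.support} K).ncard ≤ 3 ∧
      ((∃ e ∈ C, ∃ a ∈ K, a ∈ e) → (Attachments G {v | v ∈ p.support} K).ncard ≤ 2)

/-- A combinatorial near triangulation with outer 4-cycle `u v w x u`: every face other than
the outer one is a triangle. -/
structure NearTriangulationC4 [Fintype V] [DecidableEq V]
    (G : SimpleGraph V) (u v w x : V) where
  nodup : ([u, v, w, x] : List V).Nodup
  connected : G.Connected
  huv : G.Adj u v
  hvw : G.Adj v w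
  hwx : G.Adj w x
  hxu : G.Adj x u
  faces : Set (Finset (Sym2 V))
  outer_mem : ({s(u, v), s(v, w), s(w, x), s(x, u)} : Finset (Sym2 V)) ∈ faces
  face_tri : ∀ f ∈ faces,
    f ≠ ({s(u, v), s(v, w), s(w, x), s(x, u)} : Finset (Sym2 V)) → IsTriangleFace G f
  edge_faces : ∀ e ∈ G.edgeSet, {f ∈ faces | e ∈ f}.ncard = 2
  euler : (Fintype.card V : ℤ) - (G.edgeSet.ncard : ℤ) + (faces.ncard : ℤ) = 2

/-- A Hamiltonian path: a path visiting every vertex. -/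
def IsHamPath {W : Type*} (H : SimpleGraph W) {a b : W} (p : H.Walk a b) : Prop :=
  p.IsPath ∧ ∀ z : W, z ∈ p.support

/-- A graph is outer planar iff its vertices can be placed (injectively) on a line/circle so
that no two edges cross. -/
def OuterPlanar {W : Type*} (H : SimpleGraph W) : Prop :=
  ∃ f : W → ℝ, Function.Injective f ∧
    ∀ a b c d : W, H.Adj a b → H.Adj c d → ¬ (f a < f c ∧ f c < f b ∧ f b < f d)

/-- A diamond-6-cycle in `G` on the nine listed vertices: three diamonds (`K₄` minus an edge)
glued in a cyclic fashion at the vertices `k₁ k₂ k₃`.  Its crucial vertices (the degree-3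
vertices) are `a₁ b₁ a₂ b₂ a₃ b₃`. -/
def IsDiamond6 (G : SimpleGraph V) (k₁ k₂ k₃ a₁ b₁ a₂ b₂ a₃ b₃ : V) : Prop :=
  ([k₁, k₂, k₃, a₁, b₁, a₂, b₂, a₃, b₃] : List V).Nodup ∧
  G.Adj a₁ b₁ ∧ G.Adj a₁ k₁ ∧ G.Adj a₁ k₂ ∧ G.Adj b₁ k₁ ∧ G.Adj b₁ k₂ ∧
  G.Adj a₂ b₂ ∧ G.Adj a₂ k₂ ∧ G.Adj a₂ k₃ ∧ G.Adj b₂ k₂ ∧ G.Adj b₂ k₃ ∧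
  G.Adj a₃ b₃ ∧ G.Adj a₃ k₃ ∧ G.Adj a₃ k₁ ∧ G.Adj b₃ k₃ ∧ G.Adj b₃ k₁

/-- `v` lies on a separating 4-cycle of `G`. -/
def OnSep4Cycle (G : SimpleGraph V) (v : V) : Prop :=
  ∃ a b c d : V, IsCycle4 G a b c d ∧ IsSeparating G {a, b, c, d} ∧
    v ∈ ({a, b, c, d} : Set V)

/-- A diamond-4-cycle in `G`: a 4-cycle `a b c d a` together with a vertex `e` adjacent to
`a`, `b` and `d`.  Its crucial vertices are `a` and `e` (the two degree-3 vertices not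
adjacent to the degree-2 vertex `c`). -/
structure Diamond4 (G : SimpleGraph V) where
  a : V
  b : V
  c : V
  d : V
  e : V
  nodup : ([a, b, c, d, e] : List V).Nodup
  hab : G.Adj a b
  hbc : G.Adj b c
  hcd : G.Adj c d
  hda : G.Adj d a
  hea : G.Adj e a
  heb : G.Adj e b
  hed : G.Adj e d

/-- The vertex set of a diamond-4-cycle. -/
def Diamond4.verts [DecidableEq V] {G : SimpleGraph V} (D : Diamond4 G) : Finset V :=
  {D.a, D.b, D.c, D.d, D.e}

/-- The edge set of a diamond-4-cycle. -/
def Diamond4.edges [DecidableEq V] {G : SimpleGraph V} (D : Diamond4 G) : Finset (Sym2 V) :=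
  {s(D.a, D.b), s(D.b, D.c), s(D.c, D.d), s(D.d, D.a), s(D.e, D.a), s(D.e, D.b), s(D.e, D.d)}

/-- The crucial vertices of a diamond-4-cycle. -/
def Diamond4.crucial {G : SimpleGraph V} (D : Diamond4 G) : Set V := {D.a, D.e}

/-- `b` induces a subgraph of `G` that is 2-connected or a single edge. -/
def TwoConnSet (G : SimpleGraph V) (b : Set V) : Prop :=
  2 ≤ b.ncard ∧ (G.induce b).Connected ∧
    (b.ncard = 2 ∨ ∀ c ∈ b, (G.induce (b \ {c})).Connected)

/-- `b` is (the vertex set of) a block of the subgraph of `G` induced by `T`. -/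
def IsBlockIn (G : SimpleGraph V) (T b : Set V) : Prop :=
  b ⊆ T ∧ TwoConnSet G b ∧ ∀ b' : Set V, b ⊂ b' → b' ⊆ T → ¬ TwoConnSet G b'

/-- The children of `v` in the tree `T` rooted at `r`. -/
def RootedChildren (T : SimpleGraph V) (r v : V) : Set V :=
  {w | T.Adj v w ∧ T.dist r w = T.dist r v + 1}

/-- `v` is a leaf of the tree `T` rooted at `r` (it has no children). -/
def RootedLeaf (T : SimpleGraph V) (r v : V) : Prop :=
  RootedChildren T r v = ∅

/-- If a 4-cycle contains two opposite vertices of an independent set `S`, then it is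
saturated by `S`, contradicting the hypothesis. -/
private lemma aux4_cycle {V : Type*} {G : SimpleGraph V} {S : Set V} (hInd : IndepSet G S)
    (hsat4 : ∀ a b c d : V, IsCycle4 G a b c d →
      (({a, b, c, d} : Set V) ∩ S).ncard ≠ 2)
    {p q r t : V} (hc : IsCycle4 G p q r t) (hp : p ∈ S) (hr : r ∈ S) : False := by
  obtain ⟨hnd, hpq, hqr, hrt, htp⟩ := hc
  have hnd' := hnd
  simp only [List.nodup_cons, List.mem_cons, List.mem_singleton, List.not_mem_nil,
    or_false, not_or, List.nodup_nil, and_true] at hnd'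
  obtain ⟨⟨hpq', hpr', hpt'⟩, ⟨hqr', hqt'⟩, hrt'⟩ := hnd'
  have hq : q ∉ S := fun hq => hInd p hp q hq hpq' hpq
  have ht : t ∉ S := fun ht => hInd t ht p hp (fun h => hpt' h.symm) htp
  have hset : ({p, q, r, t} : Set V) ∩ S = {p, r} := by
    ext x
    simp only [Set.mem_inter_iff, Set.mem_insert_iff, Set.mem_singleton_iff]
    constructor
    · rintro ⟨(rfl | rfl | rfl | rfl), hx⟩ <;> tauto
    · rintro (rfl | rfl) <;> tauto
  exact hsat4 p q r t ⟨hnd, hpq, hqr, hrt, htp⟩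
    (by rw [hset, Set.ncard_pair hpr'])

/-- Let `G` be a 4-connected planar triangulation and `S` an independent set of vertices of
degree at most 6 saturating no 4-cycle and no 5-cycle.  Then for every separating 4-cycle
`C` of `G`, the number of vertices of `S` on `C` plus the number of vertices of `S` off `C`
with at least 3 neighbors on `C` is at most 1. -/
theorem sep4cycle_few_special_vertices
    [Fintype V] [DecidableEq V] (G : SimpleGraph V)
    (hPT : Nonempty (PlaneTriangulation G)) (h4 : FourConnected G)
    (S : Set V) (hInd : IndepSet G S)
    (hdeg : ∀ v ∈ S, (G.neighborSet v).ncard ≤ 6)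
    (hsat4 : ∀ a b c d : V, IsCycle4 G a b c d →
      (({a, b, c, d} : Set V) ∩ S).ncard ≠ 2)
    (hsat5 : ∀ a b c d e : V, IsCycle5 G a b c d e →
      (({a, b, c, d, e} : Set V) ∩ S).ncard ≠ 2) :
    ∀ a b c d : V, IsCycle4 G a b c d → IsSeparating G {a, b, c, d} →
      (({a, b, c, d} : Set V) ∩ S).ncard +
        {v ∈ S | v ∉ ({a, b, c, d} : Set V) ∧
          3 ≤ (({a, b, c, d} : Set V) ∩ G.neighborSet v).ncard}.ncard ≤ 1 := by
  intro a b c d hC _hsep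
  obtain ⟨hnd, hab, hbc, hcd, hda⟩ := hC
  have hCyc : IsCycle4 G a b c d := ⟨hnd, hab, hbc, hcd, hda⟩
  have hnd' := hnd
  simp only [List.nodup_cons, List.mem_cons, List.mem_singleton, List.not_mem_nil,
    or_false, not_or, List.nodup_nil, and_true] at hnd'
  obtain ⟨⟨hab', hac', had'⟩, ⟨hbc', hbd'⟩, hcd', -⟩ := hnd'
  set C : Set V := {a, b, c, d} with hCdef
  set T : Set V := {v ∈ S | v ∉ C ∧ 3 ≤ (C ∩ G.neighborSet v).ncard} with hTdef
  have hC4 : C.ncard = 4 := by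
    rw [hCdef, Set.ncard_insert_of_notMem (by simp [hab', hac', had']),
      Set.ncard_insert_of_notMem (by simp [hbc', hbd']),
      Set.ncard_insert_of_notMem (by simp [hcd']), Set.ncard_singleton]
  -- for v ∈ T, the set of non-neighbors of v on C is a subsingleton
  have key : ∀ v ∈ T, (C \ G.neighborSet v).Subsingleton := by
    intro v hv
    have h3 := hv.2.2
    have heq := Set.ncard_inter_add_ncard_diff_eq_ncard C (G.neighborSet v) (Set.toFinite C)
    intro x hx y hy
    exact (Set.ncard_le_one (Set.toFinite _)).1 (by omega) x hx y hy
  -- at most one vertex of S on C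
  have L1 : ∀ x ∈ C ∩ S, ∀ y ∈ C ∩ S, x = y := by
    rintro x ⟨hxC, hxS⟩ y ⟨hyC, hyS⟩
    rcases hxC with rfl | rfl | rfl | rfl <;> rcases hyC with rfl | rfl | rfl | rfl <;>
      first
      | rfl
      | (exact absurd hab (hInd _ hxS _ hyS (by tauto)))
      | (exact absurd hab (hInd _ hyS _ hxS (by tauto)))
      | (exact absurd hbc (hInd _ hxS _ hyS (by tauto)))
      | (exact absurd hbc (hInd _ hyS _ hxS (by tauto)))
      | (exact absurd hcd (hInd _ hxS _ hyS (by tauto)))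
      | (exact absurd hcd (hInd _ hyS _ hxS (by tauto)))
      | (exact absurd hda (hInd _ hxS _ hyS (by tauto)))
      | (exact absurd hda (hInd _ hyS _ hxS (by tauto)))
      | (exact absurd (aux4_cycle hInd hsat4 hCyc hxS hyS) not_false)
      | (exact absurd (aux4_cycle hInd hsat4 hCyc hyS hxS) not_false)
      | (exact absurd (aux4_cycle hInd hsat4
          ⟨by simpa [List.nodup_cons, not_or] using
            ⟨⟨hbc', hbd', fun h => hab' h.symm⟩, ⟨hcd', fun h => hac' h.symm⟩,
              fun h => had' h.symm⟩, hbc, hcd, hda, hab⟩ hxS hyS) not_false)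
      | (exact absurd (aux4_cycle hInd hsat4
          ⟨by simpa [List.nodup_cons, not_or] using
            ⟨⟨hbc', hbd', fun h => hab' h.symm⟩, ⟨hcd', fun h => hac' h.symm⟩,
              fun h => had' h.symm⟩, hbc, hcd, hda, hab⟩ hyS hxS) not_false)
  -- no vertex of S on C together with a vertex of T
  have L2 : ∀ x ∈ C ∩ S, ∀ v ∈ T, False := by
    rintro x ⟨hxC, hxS⟩ v hv
    have hvS := hv.1
    have hvC := hv.2.1
    have hvx : v ≠ x := fun h => hvC (h ▸ hxC)
    have hnadj : ¬ G.Adj v x := hInd v hvS x hxS hvx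
    have hxD : x ∈ C \ G.neighborSet v := ⟨hxC, hnadj⟩
    have hadj : ∀ z, z ∈ C → z ≠ x → G.Adj v z := by
      intro z hz hzx
      by_contra hnz
      exact hzx (key v hv ⟨hz, hnz⟩ hxD)
    have hva : v ≠ a := fun h => hvC (h ▸ (by simp [hCdef] : a ∈ C))
    have hvb : v ≠ b := fun h => hvC (h ▸ (by simp [hCdef] : b ∈ C))
    have hvc : v ≠ c := fun h => hvC (h ▸ (by simp [hCdef] : c ∈ C))
    have hvd : v ≠ d := fun h => hvC (h ▸ (by simp [hCdef] : d ∈ C))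
    have hbC : b ∈ C := by simp [hCdef]
    have haC : a ∈ C := by simp [hCdef]
    have hcC : c ∈ C := by simp [hCdef]
    have hdC : d ∈ C := by simp [hCdef]
    rcases hxC with rfl | rfl | rfl | rfl
    · -- x = a ; cycle a b v d
      exact aux4_cycle hInd hsat4
        ⟨by simp [List.nodup_cons, hab', hac', had', hbc', hbd', hcd', Ne.symm hab', Ne.symm hac', Ne.symm had', Ne.symm hbc', Ne.symm hbd', Ne.symm hcd', hva, hvb, hvc, hvd, hva.symm, hvb.symm, hvc.symm, hvd.symm],
          hab, (hadj b hbC (Ne.symm hab')).symm, hadj d hdC (Ne.symm had'), hda⟩ hxS hvS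
    · -- x = b ; cycle b c v a
      exact aux4_cycle hInd hsat4
        ⟨by simp [List.nodup_cons, hab', hac', had', hbc', hbd', hcd', Ne.symm hab', Ne.symm hac', Ne.symm had', Ne.symm hbc', Ne.symm hbd', Ne.symm hcd', hva, hvb, hvc, hvd, hva.symm, hvb.symm, hvc.symm, hvd.symm],
          hbc, (hadj c hcC (Ne.symm hbc')).symm, hadj a haC hab', hab⟩ hxS hvS
    · -- x = c ; cycle c d v b
      exact aux4_cycle hInd hsat4
        ⟨by simp [List.nodup_cons, hab', hac', had', hbc', hbd', hcd', Ne.symm hab', Ne.symm hac', Ne.symm had', Ne.symm hbc', Ne.symm hbd', Ne.symm hcd', hva, hvb, hvc, hvd, hva.symm, hvb.symm, hvc.symm, hvd.symm],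
          hcd, (hadj d hdC (Ne.symm hcd')).symm, hadj b hbC hbc', hbc⟩ hxS hvS
    · -- x = d ; cycle d a v c
      exact aux4_cycle hInd hsat4
        ⟨by simp [List.nodup_cons, hab', hac', had', hbc', hbd', hcd', Ne.symm hab', Ne.symm hac', Ne.symm had', Ne.symm hbc', Ne.symm hbd', Ne.symm hcd', hva, hvb, hvc, hvd, hva.symm, hvb.symm, hvc.symm, hvd.symm],
          hda, (hadj a haC had').symm, hadj c hcC hcd', hcd⟩ hxS hvS
  -- at most one vertex of T
  have L3 : ∀ v ∈ T, ∀ w ∈ T, v = w := by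
    intro v hv w hw
    by_contra hvw
    -- common neighbors of v and w on C
    set good : Set V := {x ∈ C | G.Adj v x ∧ G.Adj w x} with hgood
    have hsub : C \ good ⊆ (C \ G.neighborSet v) ∪ (C \ G.neighborSet w) := by
      rintro x ⟨hxC, hxg⟩
      simp only [hgood, Set.mem_setOf_eq, not_and] at hxg
      by_cases hvx : G.Adj v x
      · exact Or.inr ⟨hxC, fun h => hxg hxC hvx h⟩
      · exact Or.inl ⟨hxC, hvx⟩
    have hbad : (C \ good).ncard ≤ 2 := by
      calc (C \ good).ncard ≤ ((C \ G.neighborSet v) ∪ (C \ G.neighborSet w)).ncard :=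
            Set.ncard_le_ncard hsub (Set.toFinite _)
        _ ≤ (C \ G.neighborSet v).ncard + (C \ G.neighborSet w).ncard :=
            Set.ncard_union_le _ _
        _ ≤ 1 + 1 := add_le_add
            ((Set.ncard_le_one (Set.toFinite _)).2 fun p hp q hq => key v hv hp hq)
            ((Set.ncard_le_one (Set.toFinite _)).2 fun p hp q hq => key w hw hp hq)
        _ = 2 := rfl
    have hgsub : good ⊆ C := fun x hx => hx.1
    have heq := Set.ncard_diff_add_ncard_of_subset hgsub (Set.toFinite C)
    have hgood2 : 1 < good.ncard := by omega
    obtain ⟨x, y, hxg, hyg, hxy⟩ := (Set.one_lt_ncard_iff (Set.toFinite _)).1 hgood2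
    obtain ⟨hxC, hvx, hwx⟩ := hxg
    obtain ⟨hyC, hvy, hwy⟩ := hyg
    have hvC := hv.2.1
    have hwC := hw.2.1
    have hvx' : v ≠ x := fun h => hvC (h ▸ hxC)
    have hvy' : v ≠ y := fun h => hvC (h ▸ hyC)
    have hwx' : w ≠ x := fun h => hwC (h ▸ hxC)
    have hwy' : w ≠ y := fun h => hwC (h ▸ hyC)
    -- cycle v x w y
    exact aux4_cycle hInd hsat4
      ⟨by simp [List.nodup_cons, hvx', hvw, hvy', hwx', hwy', hxy, hvx'.symm, hvy'.symm, hwx'.symm, hwy'.symm, Ne.symm hxy, fun h : w = v => hvw h.symm],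
        hvx, hwx.symm, hwy, hvy.symm⟩ hv.1 hw.1
  -- combine
  have hdisj : Disjoint (C ∩ S) T := Set.disjoint_left.mpr fun x hx hxT => hxT.2.1 hx.1
  have hun : ((C ∩ S) ∪ T).ncard = (C ∩ S).ncard + T.ncard :=
    Set.ncard_union_eq hdisj (Set.toFinite _) (Set.toFinite _)
  have hss : ∀ x ∈ (C ∩ S) ∪ T, ∀ y ∈ (C ∩ S) ∪ T, x = y := by
    rintro x (hx | hx) y (hy | hy)
    · exact L1 x hx y hy
    · exact absurd (L2 x hx y hy) not_false
    · exact absurd (L2 y hy x hx) not_false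
    · exact L3 x hx y hy
  calc (C ∩ S).ncard + T.ncard = ((C ∩ S) ∪ T).ncard := hun.symm
    _ ≤ 1 := (Set.ncard_le_one (Set.toFinite _)).2 hss
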